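/- Let y > 0, α ∈ [0, 2π), and K ∈ (0, 1). Then the sum of 1/p over all primes p satisfying cos(y·ln p + α) > K diverges. -/

import Mathlib

open Real

namespace Stmt4
open Complex Set

noncomputable def Pz (s : ℂ) : ℂ := ∑' p : Nat.Primes, (p : ℂ) ^ (-s)
noncomputable def Fz (s : ℂ) : ℂ := ∑' p : Nat.Primes, -Complex.log (1 - (p : ℂ) ^ (-s))

lemma two_le (p : Nat.Primes) : (2:ℝ) ≤ (p:ℕ) := by exact_mod_cast p.2.two_le

lemma norm_term (s : ℂ) (p : Nat.Primes) : ‖(p:ℂ)^(-s)‖ = ((p:ℕ):ℝ)^(-s.re) := by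
  have h0 : (0:ℝ) < ((p:ℕ):ℝ) := by have := two_le p; linarith
  rw [show ((p:ℕ):ℂ) = ((((p:ℕ):ℝ)):ℂ) by push_cast; ring,
    norm_cpow_eq_rpow_re_of_pos h0, Complex.neg_re]

lemma term_le_half {s : ℂ} (hs : 1 ≤ s.re) (p : Nat.Primes) : ‖(p:ℂ)^(-s)‖ ≤ 1/2 := by
  rw [norm_term]
  have h2 : (2:ℝ) ≤ ((p:ℕ):ℝ) := two_le p
  calc ((p:ℕ):ℝ)^(-s.re) ≤ ((p:ℕ):ℝ)^(-1:ℝ) := by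
        apply Real.rpow_le_rpow_of_exponent_le (by linarith) (by linarith)
    _ ≤ 1/2 := by
        rw [Real.rpow_neg_one]
        rw [inv_le_comm₀ (by linarith) (by norm_num)]
        linarith

lemma summable_norm_term {s : ℂ} (hs : 1 < s.re) :
    Summable (fun p : Nat.Primes => ‖(p:ℂ)^(-s)‖) := by
  simp only [norm_term]
  exact Nat.Primes.summable_rpow.mpr (by linarith)

lemma summable_term {s : ℂ} (hs : 1 < s.re) :
    Summable (fun p : Nat.Primes => (p:ℂ)^(-s)) := (summable_norm_term hs).of_norm

lemma neg_log_eq (p : Nat.Primes) {s : ℂ} (hs : 1 ≤ s.re) :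
    -Complex.log (1 - (p:ℂ)^(-s)) = Complex.log (1 - (p:ℂ)^(-s))⁻¹ := by
  rw [Complex.log_inv]
  apply Complex.slitPlane_arg_ne_pi
  apply Complex.mem_slitPlane_of_norm_lt_one (z := -((p:ℂ)^(-s)))
  · rw [norm_neg]; exact lt_of_le_of_lt (term_le_half hs p) (by norm_num)
  -- 1 - z = 1 + (-z)

lemma norm_neg_log_le (p : Nat.Primes) {s : ℂ} (hs : 1 ≤ s.re) :
    ‖-Complex.log (1 - (p:ℂ)^(-s))‖ ≤ (3/2) * ‖(p:ℂ)^(-s)‖ := by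
  rw [norm_neg, sub_eq_add_neg]
  calc ‖Complex.log (1 + -((p:ℂ)^(-s)))‖ ≤ 3/2 * ‖-((p:ℂ)^(-s))‖ :=
        Complex.norm_log_one_add_half_le_self (by rw [norm_neg]; exact term_le_half hs p)
    _ = 3/2 * ‖(p:ℂ)^(-s)‖ := by rw [norm_neg]

lemma summable_neg_log {s : ℂ} (hs : 1 < s.re) :
    Summable (fun p : Nat.Primes => -Complex.log (1 - (p:ℂ)^(-s))) := by
  apply Summable.of_norm
  apply Summable.of_nonneg_of_le (fun p => norm_nonneg _)
    (fun p => norm_neg_log_le p hs.le)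
  exact (summable_norm_term hs).mul_left _

lemma norm_diff_term (p : Nat.Primes) {s : ℂ} (hs : 1 ≤ s.re) :
    ‖-Complex.log (1 - (p:ℂ)^(-s)) - (p:ℂ)^(-s)‖ ≤ ((p:ℕ):ℝ)^(-2:ℝ) := by
  rw [neg_log_eq p hs]
  have h := Complex.norm_log_one_sub_inv_sub_self_le
    (z := (p:ℂ)^(-s)) (lt_of_le_of_lt (term_le_half hs p) (by norm_num))
  refine h.trans ?_
  have h1 : ‖(p:ℂ)^(-s)‖ ≤ 1/2 := term_le_half hs p
  have h2 : (1 - ‖(p:ℂ)^(-s)‖)⁻¹ ≤ 2 := by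
    rw [inv_le_comm₀ (by linarith) (by norm_num)]; linarith
  have h3 : ‖(p:ℂ)^(-s)‖^2 ≤ ((p:ℕ):ℝ)^(-2:ℝ) := by
    rw [norm_term]
    rw [← Real.rpow_natCast (((p:ℕ):ℝ)^(-s.re)) 2, ← Real.rpow_mul (by positivity)]
    apply Real.rpow_le_rpow_of_exponent_le (by have := two_le p; linarith)
    push_cast
    try nlinarith [hs]
  calc ‖(p:ℂ)^(-s)‖^2 * (1-‖(p:ℂ)^(-s)‖)⁻¹ / 2 ≤ ‖(p:ℂ)^(-s)‖^2 * 2 / 2 := by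
        gcongr
    _ = ‖(p:ℂ)^(-s)‖^2 := by ring
    _ ≤ ((p:ℕ):ℝ)^(-2:ℝ) := h3

noncomputable def C₀ : ℝ := ∑' p : Nat.Primes, ((p:ℕ):ℝ)^(-2:ℝ)

lemma summable_psq : Summable (fun p : Nat.Primes => ((p:ℕ):ℝ)^(-2:ℝ)) :=
  Nat.Primes.summable_rpow.mpr (by norm_num)

lemma Fz_sub_Pz {s : ℂ} (hs : 1 < s.re) : ‖Fz s - Pz s‖ ≤ C₀ := by
  rw [Fz, Pz, ← Summable.tsum_sub (summable_neg_log hs) (summable_term hs)]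
  refine (norm_tsum_le_tsum_norm ?_).trans ?_
  · apply Summable.of_nonneg_of_le (fun p => norm_nonneg _)
      (fun p => norm_diff_term p hs.le) summable_psq
  · exact Summable.tsum_le_tsum (fun p => norm_diff_term p hs.le)
      (((summable_neg_log hs).sub (summable_term hs)).norm) summable_psq


lemma cont_term (t : ℝ) (p : Nat.Primes) :
    Continuous (fun u : ℝ => ((p:ℕ):ℂ) ^ (-((u:ℂ) + t*I))) := by
  apply Continuous.const_cpow (by continuity)
  left
  exact_mod_cast p.2.ne_zero

lemma re_line (u t : ℝ) : ((u:ℂ) + t*I).re = u := by simp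

lemma FzContOn (t : ℝ) {a : ℝ} (ha : 1 < a) :
    ContinuousOn (fun u : ℝ => Fz ((u:ℂ) + t*I)) (Ici a) := by
  apply continuousOn_tsum (u := fun p : Nat.Primes => 3/2 * ((p:ℕ):ℝ)^(-a))
  · intro p
    apply ContinuousOn.neg
    apply ContinuousOn.clog ((continuous_const.sub (cont_term t p)).continuousOn)
    intro u hu
    have h : ‖-(((p:ℕ):ℂ) ^ (-((u:ℂ) + t*I)))‖ < 1 := by
      rw [norm_neg]
      refine lt_of_le_of_lt (term_le_half ?_ p) (by norm_num)
      rw [re_line]; exact le_trans ha.le hu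
    have := Complex.mem_slitPlane_of_norm_lt_one h
    rwa [show (1:ℂ) + -(((p:ℕ):ℂ) ^ (-((u:ℂ) + t*I))) = 1 - ((p:ℕ):ℂ) ^ (-((u:ℂ) + t*I)) by ring]
      at this
  · exact (Nat.Primes.summable_rpow.mpr (by linarith)).mul_left _
  · intro p u hu
    refine (norm_neg_log_le p (by rw [re_line]; exact le_trans ha.le hu)).trans ?_
    rw [norm_term, re_line]
    gcongr
    · exact le_trans (by norm_num) (two_le p)
    · exact hu

lemma FzContAt (t : ℝ) {u₀ : ℝ} (h : 1 < u₀) :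
    ContinuousAt (fun u : ℝ => Fz ((u:ℂ) + t*I)) u₀ := by
  refine (FzContOn t (a := (1+u₀)/2) (by linarith)).continuousAt ?_
  exact Ici_mem_nhds (by linarith)


lemma Fz_bounded (t : ℝ) (ht : t ≠ 0) :
    ∃ C, ∀ σ ∈ Ioc (1:ℝ) 2, ‖Fz ((σ:ℂ) + t*I)‖ ≤ C := by
  set ξ : ℝ → ℂ := fun u => riemannZeta ((u:ℂ) + t*I) with hξdef
  have hne1 : ∀ u : ℝ, ((u:ℂ) + t*I) ≠ 1 := by
    intro u h
    apply ht
    have := congrArg Complex.im h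
    simpa using this
  have hξc : Continuous ξ := by
    rw [continuous_iff_continuousAt]
    intro u
    have h1 : ContinuousAt (fun u : ℝ => ((u:ℂ) + t*I)) u := by fun_prop
    exact ContinuousAt.comp (f := fun u : ℝ => ((u:ℂ) + t*I)) (g := riemannZeta)
      (differentiableAt_riemannZeta (hne1 u)).continuousAt h1
  have hξne : ∀ u : ℝ, 1 ≤ u → ξ u ≠ 0 := by
    intro u hu
    exact riemannZeta_ne_zero_of_one_le_re (by rw [re_line]; exact hu)
  set w : ℂ := ξ 1 with hwdef
  have hw : w ≠ 0 := hξne 1 le_rfl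
  have hw2 : 0 < ‖w‖ := norm_pos_iff.mpr hw
  -- find σ₀
  obtain ⟨δ, hδ0, hδ⟩ := Metric.continuousAt_iff.mp (hξc.continuousAt (x := 1)) (‖w‖/2)
    (by linarith)
  set σ₀ : ℝ := min (1 + δ/2) 2 with hσ₀def
  have hσ₀1 : 1 < σ₀ := lt_min (by linarith) (by norm_num)
  have hσ₀2 : σ₀ ≤ 2 := min_le_right _ _
  have hclose : ∀ u ∈ Ioc (1:ℝ) σ₀, ‖ξ u - w‖ < ‖w‖/2 := by
    intro u hu
    have h1 : dist u 1 < δ := by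
      rw [Real.dist_eq, _root_.abs_of_nonneg (by linarith [hu.1.le])]
      have : u ≤ 1 + δ/2 := hu.2.trans (min_le_left _ _)
      linarith
    have := hδ h1
    rwa [dist_eq_norm] at this
  set h : ℝ → ℂ := fun u => Complex.log (ξ u / w) with hhdef
  have hzne : ∀ u ∈ Ioc (1:ℝ) σ₀, ξ u / w ≠ 0 := fun u hu =>
    div_ne_zero (hξne u hu.1.le) hw
  have hmem : ∀ u ∈ Ioc (1:ℝ) σ₀, ‖ξ u / w - 1‖ < 1/2 := by
    intro u hu
    rw [show ξ u / w - 1 = (ξ u - w)/w by field_simp, norm_div]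
    rw [div_lt_iff₀ hw2]
    calc ‖ξ u - w‖ < ‖w‖/2 := hclose u hu
      _ = 1/2 * ‖w‖ := by ring
  have hslit : ∀ u ∈ Ioc (1:ℝ) σ₀, ξ u / w ∈ Complex.slitPlane := by
    intro u hu
    have := Complex.mem_slitPlane_of_norm_lt_one
      (z := ξ u / w - 1) ((hmem u hu).trans (by norm_num))
    rwa [add_sub_cancel] at this
  have hnorm_z : ∀ u ∈ Ioc (1:ℝ) σ₀, 1/2 ≤ ‖ξ u / w‖ ∧ ‖ξ u / w‖ ≤ 2 := by
    intro u hu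
    have h1 := hmem u hu
    have h2 : |‖ξ u / w‖ - ‖(1:ℂ)‖| ≤ ‖ξ u / w - 1‖ := abs_norm_sub_norm_le _ _
    rw [norm_one] at h2
    rw [abs_le] at h2
    constructor <;> [linarith [h2.1, h1.le]; linarith [h2.2, h1.le]]
  have hbound_h : ∀ u ∈ Ioc (1:ℝ) σ₀, ‖h u‖ ≤ Real.log 2 + Real.pi := by
    intro u hu
    obtain ⟨hl, hr⟩ := hnorm_z u hu
    have hre : |(h u).re| ≤ Real.log 2 := by
      rw [hhdef]
      simp only [Complex.log_re]
      rw [abs_le]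
      constructor
      · rw [show -Real.log 2 = Real.log (1/2) by rw [one_div, Real.log_inv]]
        apply Real.log_le_log (by norm_num)
        assumption
      · apply Real.log_le_log (by positivity)
        assumption
    have him : |(h u).im| ≤ Real.pi := by
      rw [hhdef]
      simp only [Complex.log_im]
      exact Complex.abs_arg_le_pi _
    calc ‖h u‖ ≤ |(h u).re| + |(h u).im| := Complex.norm_le_abs_re_add_abs_im _
      _ ≤ Real.log 2 + Real.pi := add_le_add hre him
  have hcont_h : ContinuousOn h (Ioc (1:ℝ) σ₀) := by
    apply ContinuousOn.clog ((hξc.div_const w).continuousOn)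
    exact hslit
  have hexpF : ∀ u : ℝ, 1 < u → Complex.exp (Fz ((u:ℂ) + t*I)) = ξ u := by
    intro u hu
    rw [Fz]
    exact riemannZeta_eulerProduct_exp_log (by rw [re_line]; exact hu)
  set φ : ℝ → ℂ := fun u => Fz ((u:ℂ) + t*I) - h u with hφdef
  have hexpφ : ∀ u ∈ Ioc (1:ℝ) σ₀, Complex.exp (φ u) = w := by
    intro u hu
    rw [hφdef]
    simp only
    rw [Complex.exp_sub, hexpF u hu.1, hhdef]
    simp only
    rw [Complex.exp_log (hzne u hu)]
    rw [div_div_eq_mul_div, mul_comm, mul_div_assoc, div_self (hξne u hu.1.le), mul_one]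
  have hφcont : ContinuousOn φ (Ioc (1:ℝ) σ₀) := by
    apply ContinuousOn.sub _ hcont_h
    intro u hu
    exact (FzContAt t hu.1).continuousWithinAt
  have hσ₀mem : σ₀ ∈ Ioc (1:ℝ) σ₀ := ⟨hσ₀1, le_rfl⟩
  -- constancy of φ on Ioc 1 σ₀
  have hconst : ∀ u ∈ Ioc (1:ℝ) σ₀, φ u = φ σ₀ := by
    intro u₁ hu₁
    have hIcc : Icc u₁ σ₀ ⊆ Ioc (1:ℝ) σ₀ := fun v hv => ⟨lt_of_lt_of_le hu₁.1 hv.1, hv.2⟩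
    have hcoset : ∀ v ∈ Icc u₁ σ₀, ∃ m : ℤ, (φ v).im = (φ σ₀).im + 2 * Real.pi * m := by
      intro v hv
      have : Complex.exp (φ v) = Complex.exp (φ σ₀) := by
        rw [hexpφ v (hIcc hv), hexpφ σ₀ hσ₀mem]
      obtain ⟨m, hm⟩ := Complex.exp_eq_exp_iff_exists_int.mp this
      refine ⟨m, ?_⟩
      have := congrArg Complex.im hm
      simpa [mul_comm] using this
    obtain ⟨n, hn⟩ := hcoset u₁ ⟨le_rfl, hu₁.2⟩
    have hψcont : ContinuousOn (fun v => (φ v).im) (Icc u₁ σ₀) :=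
      (Complex.continuous_im.comp_continuousOn (hφcont.mono hIcc))
    have hne : n = 0 := by
      by_contra hn0
      have hpi := Real.pi_pos
      -- find an intermediate value (φ σ₀).im ± π
      have : ∃ v ∈ Icc u₁ σ₀, (φ v).im = (φ σ₀).im + Real.pi ∨
          (φ v).im = (φ σ₀).im - Real.pi := by
        rcases lt_or_gt_of_ne hn0 with hneg | hpos
        · -- n ≤ -1 : (φ u₁).im ≤ (φ σ₀).im - 2π
          have hle : (φ u₁).im ≤ (φ σ₀).im - 2 * Real.pi := by
            have h' : n ≤ -1 := by omega
            have : (n:ℝ) ≤ -1 := by exact_mod_cast h'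
            nlinarith
          have hmem2 : (φ σ₀).im - Real.pi ∈ Icc ((φ u₁).im) ((φ σ₀).im) :=
            ⟨by linarith, by linarith⟩
          obtain ⟨v, hv, hveq⟩ := intermediate_value_Icc hu₁.2 hψcont hmem2
          exact ⟨v, hv, Or.inr hveq⟩
        · have hle : (φ σ₀).im + 2 * Real.pi ≤ (φ u₁).im := by
            have h' : 1 ≤ n := by omega
            have : (1:ℝ) ≤ (n:ℝ) := by exact_mod_cast h'
            nlinarith
          have hmem2 : (φ σ₀).im + Real.pi ∈ Icc ((φ σ₀).im) ((φ u₁).im) :=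
            ⟨by linarith, by linarith⟩
          obtain ⟨v, hv, hveq⟩ := intermediate_value_Icc' hu₁.2 hψcont hmem2
          exact ⟨v, hv, Or.inl hveq⟩
      obtain ⟨v, hv, hveq⟩ := this
      obtain ⟨m, hm⟩ := hcoset v hv
      have hpi := Real.pi_pos
      rcases hveq with hveq | hveq
      · rw [hveq] at hm
        have hthis : Real.pi = 2 * Real.pi * m := by linarith
        have hpne : Real.pi ≠ 0 := ne_of_gt hpi
        have h3 : Real.pi * (2*(m:ℝ)) = Real.pi * 1 := by linarith [hthis]
        have h2 : (2*(m:ℝ)) = 1 := mul_left_cancel₀ hpne h3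
        have h4 : (2*m : ℤ) = 1 := by exact_mod_cast h2
        omega
      · rw [hveq] at hm
        have hthis : -Real.pi = 2 * Real.pi * m := by linarith
        have hpne : Real.pi ≠ 0 := ne_of_gt hpi
        have h3 : Real.pi * (2*(m:ℝ)) = Real.pi * (-1) := by linarith [hthis]
        have h2 : (2*(m:ℝ)) = -1 := mul_left_cancel₀ hpne h3
        have h4 : (2*m : ℤ) = -1 := by exact_mod_cast h2
        omega
    -- now n = 0, so imaginary parts agree; real parts always agree
    have hre : (φ u₁).re = (φ σ₀).re := by
      have h1 : Real.exp ((φ u₁).re) = ‖w‖ := by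
        rw [← Complex.norm_exp, hexpφ u₁ hu₁]
      have h2 : Real.exp ((φ σ₀).re) = ‖w‖ := by
        rw [← Complex.norm_exp, hexpφ σ₀ hσ₀mem]
      have := h1.trans h2.symm
      exact Real.exp_injective this
    have him : (φ u₁).im = (φ σ₀).im := by
      rw [hne] at hn
      push_cast at hn
      linarith
    exact Complex.ext hre him
  -- bounds
  set C₁ : ℝ := Real.log 2 + Real.pi + ‖φ σ₀‖ with hC₁def
  have hb1 : ∀ u ∈ Ioc (1:ℝ) σ₀, ‖Fz ((u:ℂ) + t*I)‖ ≤ C₁ := by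
    intro u hu
    have : Fz ((u:ℂ) + t*I) = h u + φ σ₀ := by
      rw [← hconst u hu, hφdef]; ring
    rw [this]
    calc ‖h u + φ σ₀‖ ≤ ‖h u‖ + ‖φ σ₀‖ := norm_add_le _ _
      _ ≤ C₁ := by have := hbound_h u hu; rw [hC₁def]; linarith
  obtain ⟨C₂, hC₂⟩ := (isCompact_Icc (a := σ₀) (b := 2)).exists_bound_of_continuousOn
    (f := fun u : ℝ => Fz ((u:ℂ) + t*I)) (by
      intro u hu
      exact (FzContAt t (lt_of_lt_of_le hσ₀1 hu.1)).continuousWithinAt)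
  refine ⟨max C₁ C₂, ?_⟩
  intro σ hσ
  rcases le_or_gt σ σ₀ with hle | hlt
  · exact le_trans (hb1 σ ⟨hσ.1, hle⟩) (le_max_left _ _)
  · exact le_trans (hC₂ σ ⟨hlt.le, hσ.2⟩) (le_max_right _ _)


lemma Pz_bounded (t : ℝ) (ht : t ≠ 0) :
    ∃ C, 0 ≤ C ∧ ∀ σ ∈ Ioc (1:ℝ) 2, ‖Pz ((σ:ℂ) + t*I)‖ ≤ C := by
  obtain ⟨C, hC⟩ := Fz_bounded t ht
  refine ⟨max (C + C₀) 0, le_max_right _ _, ?_⟩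
  intro σ hσ
  have hre : (1:ℝ) < ((σ:ℂ) + t*I).re := by rw [re_line]; exact hσ.1
  calc ‖Pz ((σ:ℂ) + t*I)‖
      = ‖Fz ((σ:ℂ) + t*I) - (Fz ((σ:ℂ) + t*I) - Pz ((σ:ℂ) + t*I))‖ := by ring_nf
    _ ≤ ‖Fz ((σ:ℂ) + t*I)‖ + ‖Fz ((σ:ℂ) + t*I) - Pz ((σ:ℂ) + t*I)‖ := norm_sub_le _ _
    _ ≤ C + C₀ := add_le_add (hC σ hσ) (Fz_sub_Pz hre)
    _ ≤ max (C + C₀) 0 := le_max_left _ _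

/-- `e^{ijx}` -/
noncomputable def ee (x : ℝ) (j : ℤ) : ℂ := Complex.exp (((j * x : ℝ) : ℂ) * I)

lemma ee_add (x : ℝ) (a b : ℤ) : ee x (a + b) = ee x a * ee x b := by
  rw [ee, ee, ee, ← Complex.exp_add]
  congr 1
  push_cast
  ring

lemma ee_zero (x : ℝ) : ee x 0 = 1 := by simp [ee]

lemma norm_ee (x : ℝ) (j : ℤ) : ‖ee x j‖ = 1 := by
  rw [ee, Complex.norm_exp_ofReal_mul_I]

lemma cos_eq_ee (x : ℝ) : ((Real.cos x : ℝ) : ℂ) = (ee x 1 + ee x (-1)) / 2 := by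
  rw [Complex.ofReal_cos, Complex.cos, ee, ee]
  push_cast
  ring_nf

/-- twisted prime sums -/
noncomputable def T (y α σ : ℝ) (j : ℤ) : ℂ :=
  ∑' p : Nat.Primes, ee (y * Real.log p + α) j * ((((p:ℕ):ℝ)^(-σ) : ℝ) : ℂ)

noncomputable def Sig (σ : ℝ) : ℝ := ∑' p : Nat.Primes, ((p:ℕ):ℝ)^(-σ)

lemma summable_rpow_neg {σ : ℝ} (hσ : 1 < σ) :
    Summable (fun p : Nat.Primes => ((p:ℕ):ℝ)^(-σ)) :=
  Nat.Primes.summable_rpow.mpr (by linarith)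

lemma summable_T_term (y α : ℝ) (j : ℤ) {σ : ℝ} (hσ : 1 < σ) :
    Summable (fun p : Nat.Primes => ee (y * Real.log p + α) j * ((((p:ℕ):ℝ)^(-σ) : ℝ) : ℂ)) := by
  apply Summable.of_norm
  have : ∀ p : Nat.Primes, ‖ee (y * Real.log p + α) j * ((((p:ℕ):ℝ)^(-σ) : ℝ) : ℂ)‖
      = ((p:ℕ):ℝ)^(-σ) := by
    intro p
    rw [norm_mul, norm_ee, one_mul, Complex.norm_real, Real.norm_eq_abs,
      _root_.abs_of_nonneg (by positivity)]
  rw [funext this]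
  exact summable_rpow_neg hσ

lemma T_zero (y α : ℝ) {σ : ℝ} : T y α σ 0 = ((Sig σ : ℝ) : ℂ) := by
  rw [T, Sig, Complex.ofReal_tsum]
  congr 1
  funext p
  rw [ee_zero, one_mul]

lemma Sig_nonneg {σ : ℝ} : 0 ≤ Sig σ := tsum_nonneg (fun p => by positivity)

lemma T_eq (y α σ : ℝ) (j : ℤ) :
    T y α σ j = ee α j * Pz ((σ:ℂ) + ((-(j*y) : ℝ) : ℂ)*I) := by
  rw [T, Pz, ← tsum_mul_left]
  congr 1
  funext p
  have hp0 : (0:ℝ) < ((p:ℕ):ℝ) := by have := two_le p; linarith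
  have hlog : Complex.log ((p:ℕ):ℂ) = ((Real.log ((p:ℕ):ℝ) : ℝ) : ℂ) := by
    rw [show ((p:ℕ):ℂ) = ((((p:ℕ):ℝ)):ℂ) by push_cast; ring]
    exact (Complex.ofReal_log hp0.le).symm
  rw [Complex.cpow_def_of_ne_zero (by exact_mod_cast p.2.ne_zero), hlog]
  rw [Real.rpow_def_of_pos hp0, Complex.ofReal_exp, ee, ee, ← Complex.exp_add,
    ← Complex.exp_add]
  congr 1
  push_cast
  ring

lemma T_bounded (y α : ℝ) (hy : 0 < y) (j : ℤ) (hj : j ≠ 0) :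
    ∃ C, 0 ≤ C ∧ ∀ σ ∈ Ioc (1:ℝ) 2, ‖T y α σ j‖ ≤ C := by
  obtain ⟨C, hC0, hC⟩ := Pz_bounded (-(j*y))
    (by simp only [ne_eq, neg_eq_zero, mul_eq_zero]; push_cast
        rintro (h | h)
        · exact hj (by exact_mod_cast h)
        · exact hy.ne' h)
  refine ⟨C, hC0, ?_⟩
  intro σ hσ
  rw [T_eq]
  rw [norm_mul, norm_ee, one_mul]
  exact hC σ hσ


lemma conj_ee (x : ℝ) (j : ℤ) : (starRingEnd ℂ) (ee x j) = ee x (-j) := by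
  rw [ee, ee, ← Complex.exp_conj]
  congr 1
  simp only [map_mul, Complex.conj_I, Complex.conj_ofReal]
  push_cast
  ring

/-- Dirichlet-kernel-type sum -/
noncomputable def DD (N : ℕ) (x : ℝ) : ℂ := ∑ k ∈ Finset.range N, ee x (k : ℤ)

lemma norm_DD_le (N : ℕ) (x : ℝ) : ‖DD N x‖ ≤ N := by
  refine (norm_sum_le _ _).trans ?_
  simp only [norm_ee]
  simp

lemma normSq_DD_le (N : ℕ) (x : ℝ) : Complex.normSq (DD N x) ≤ (N:ℝ)^2 := by
  rw [Complex.normSq_eq_norm_sq]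
  have h := norm_DD_le N x
  have := norm_nonneg (DD N x)
  nlinarith

lemma normSq_DD_expand (N : ℕ) (x : ℝ) :
    ((Complex.normSq (DD N x) : ℝ) : ℂ) =
      ∑ k ∈ Finset.range N, ∑ l ∈ Finset.range N, ee x ((k:ℤ) - l) := by
  rw [← Complex.mul_conj, DD, map_sum, Finset.sum_mul_sum]
  refine Finset.sum_congr rfl (fun k _ => Finset.sum_congr rfl (fun l _ => ?_))
  rw [conj_ee, ← ee_add, sub_eq_add_neg]

lemma key_pointwise (K : ℝ) (N : ℕ) (x : ℝ) :
    (((Real.cos x - K) * Complex.normSq (DD N x) : ℝ) : ℂ) =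
      ∑ k ∈ Finset.range N, ∑ l ∈ Finset.range N,
        ((((1:ℝ)/2 : ℝ) : ℂ) * ee x ((k:ℤ) - l + 1) + (((1:ℝ)/2 : ℝ) : ℂ) * ee x ((k:ℤ) - l - 1)
          - ((K:ℝ) : ℂ) * ee x ((k:ℤ) - l)) := by
  rw [Complex.ofReal_mul, Complex.ofReal_sub, cos_eq_ee, normSq_DD_expand, Finset.mul_sum]
  refine Finset.sum_congr rfl (fun k _ => ?_)
  rw [Finset.mul_sum]
  refine Finset.sum_congr rfl (fun l _ => ?_)
  rw [show (k:ℤ) - l + 1 = ((k:ℤ) - l) + 1 by ring, ee_add,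
    show (k:ℤ) - l - 1 = ((k:ℤ) - l) + (-1) by ring, ee_add]
  push_cast
  ring

lemma tsum_comb (y α K σ : ℝ) (hσ : 1 < σ) (j₁ j₂ j₃ : ℤ) :
    ∑' p : Nat.Primes, (((((1:ℝ)/2 : ℝ) : ℂ) * ee (y * Real.log p + α) j₁
        + (((1:ℝ)/2 : ℝ) : ℂ) * ee (y * Real.log p + α) j₂
        - ((K:ℝ) : ℂ) * ee (y * Real.log p + α) j₃) * ((((p:ℕ):ℝ)^(-σ) : ℝ) : ℂ))
      = (((1:ℝ)/2 : ℝ) : ℂ) * T y α σ j₁ + (((1:ℝ)/2 : ℝ) : ℂ) * T y α σ j₂ - ((K:ℝ) : ℂ) * T y α σ j₃ := by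
  have h1 := summable_T_term y α j₁ hσ
  have h2 := summable_T_term y α j₂ hσ
  have h3 := summable_T_term y α j₃ hσ
  have e1 : ∀ p : Nat.Primes, ((((1:ℝ)/2 : ℝ) : ℂ) * ee (y * Real.log p + α) j₁
        + (((1:ℝ)/2 : ℝ) : ℂ) * ee (y * Real.log p + α) j₂
        - ((K:ℝ) : ℂ) * ee (y * Real.log p + α) j₃) * ((((p:ℕ):ℝ)^(-σ) : ℝ) : ℂ)
      = (((1:ℝ)/2 : ℝ) : ℂ) * (ee (y * Real.log p + α) j₁ * ((((p:ℕ):ℝ)^(-σ) : ℝ) : ℂ))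
        + (((1:ℝ)/2 : ℝ) : ℂ) * (ee (y * Real.log p + α) j₂ * ((((p:ℕ):ℝ)^(-σ) : ℝ) : ℂ))
        - ((K:ℝ) : ℂ) * (ee (y * Real.log p + α) j₃ * ((((p:ℕ):ℝ)^(-σ) : ℝ) : ℂ)) := by
    intro p; ring
  rw [funext e1, Summable.tsum_sub (((h1.mul_left _).add (h2.mul_left _))) (h3.mul_left _),
    Summable.tsum_add (h1.mul_left _) (h2.mul_left _), tsum_mul_left, tsum_mul_left, tsum_mul_left]
  rfl


lemma summable_comb (y α K σ : ℝ) (hσ : 1 < σ) (j₁ j₂ j₃ : ℤ) :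
    Summable (fun p : Nat.Primes => ((((1:ℝ)/2 : ℝ) : ℂ) * ee (y * Real.log p + α) j₁
        + (((1:ℝ)/2 : ℝ) : ℂ) * ee (y * Real.log p + α) j₂
        - ((K:ℝ) : ℂ) * ee (y * Real.log p + α) j₃) * ((((p:ℕ):ℝ)^(-σ) : ℝ) : ℂ)) := by
  have h1 := summable_T_term y α j₁ hσ
  have h2 := summable_T_term y α j₂ hσ
  have h3 := summable_T_term y α j₃ hσ
  have e1 : ∀ p : Nat.Primes, ((((1:ℝ)/2 : ℝ) : ℂ) * ee (y * Real.log p + α) j₁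
        + (((1:ℝ)/2 : ℝ) : ℂ) * ee (y * Real.log p + α) j₂
        - ((K:ℝ) : ℂ) * ee (y * Real.log p + α) j₃) * ((((p:ℕ):ℝ)^(-σ) : ℝ) : ℂ)
      = (((1:ℝ)/2 : ℝ) : ℂ) * (ee (y * Real.log p + α) j₁ * ((((p:ℕ):ℝ)^(-σ) : ℝ) : ℂ))
        + (((1:ℝ)/2 : ℝ) : ℂ) * (ee (y * Real.log p + α) j₂ * ((((p:ℕ):ℝ)^(-σ) : ℝ) : ℂ))
        - ((K:ℝ) : ℂ) * (ee (y * Real.log p + α) j₃ * ((((p:ℕ):ℝ)^(-σ) : ℝ) : ℂ)) := by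
    intro p; ring
  rw [funext e1]
  exact ((h1.mul_left _).add (h2.mul_left _)).sub (h3.mul_left _)

lemma count_sum (N : ℕ) (hN : 1 ≤ N) (K : ℝ) :
    ∑ k ∈ Finset.range N, ∑ l ∈ Finset.range N,
      ((if (k:ℤ) - l + 1 = 0 then (1:ℝ)/2 else 0) + (if (k:ℤ) - l - 1 = 0 then (1:ℝ)/2 else 0)
        - (if (k:ℤ) - l = 0 then K else 0))
      = ((N:ℝ) - 1) - K * N := by
  have hsplit : ∀ k ∈ Finset.range N, ∑ l ∈ Finset.range N,
      ((if (k:ℤ) - l + 1 = 0 then (1:ℝ)/2 else 0) + (if (k:ℤ) - l - 1 = 0 then (1:ℝ)/2 else 0)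
        - (if (k:ℤ) - l = 0 then K else 0))
      = (∑ l ∈ Finset.range N, (if (k:ℤ) - l + 1 = 0 then (1:ℝ)/2 else 0))
        + (∑ l ∈ Finset.range N, (if (k:ℤ) - l - 1 = 0 then (1:ℝ)/2 else 0))
        - (∑ l ∈ Finset.range N, (if (k:ℤ) - l = 0 then K else 0)) := by
    intro k _
    rw [Finset.sum_sub_distrib, Finset.sum_add_distrib]
  rw [Finset.sum_congr rfl hsplit]
  have ha : ∀ k ∈ Finset.range N, ∑ l ∈ Finset.range N,
      (if (k:ℤ) - l + 1 = 0 then (1:ℝ)/2 else 0) = if k + 1 < N then (1:ℝ)/2 else 0 := by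
    intro k hk
    have : ∀ l ∈ Finset.range N, (if (k:ℤ) - l + 1 = 0 then (1:ℝ)/2 else 0)
        = (if l = k + 1 then (1:ℝ)/2 else 0) := by
      intro l _
      exact if_congr (by omega) rfl rfl
    rw [Finset.sum_congr rfl this, Finset.sum_ite_eq' (Finset.range N) (k+1) (fun _ => (1:ℝ)/2)]
    simp [Finset.mem_range]
  have hb : ∀ k ∈ Finset.range N, ∑ l ∈ Finset.range N,
      (if (k:ℤ) - l - 1 = 0 then (1:ℝ)/2 else 0) = if 1 ≤ k then (1:ℝ)/2 else 0 := by
    intro k hk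
    rcases Nat.eq_zero_or_pos k with rfl | hkpos
    · rw [if_neg (by omega)]
      exact Finset.sum_eq_zero (fun l _ => if_neg (by omega))
    · have : ∀ l ∈ Finset.range N, (if (k:ℤ) - l - 1 = 0 then (1:ℝ)/2 else 0)
          = (if l = k - 1 then (1:ℝ)/2 else 0) := by
        intro l _
        exact if_congr (by omega) rfl rfl
      rw [Finset.sum_congr rfl this, Finset.sum_ite_eq' (Finset.range N) (k-1) (fun _ => (1:ℝ)/2),
        if_pos (Finset.mem_range.mpr (by have := Finset.mem_range.mp hk; omega)),
        if_pos (by omega : 1 ≤ k)]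
  have hc : ∀ k ∈ Finset.range N, ∑ l ∈ Finset.range N,
      (if (k:ℤ) - l = 0 then K else 0) = K := by
    intro k hk
    have : ∀ l ∈ Finset.range N, (if (k:ℤ) - l = 0 then K else 0)
        = (if l = k then K else 0) := by
      intro l _
      exact if_congr (by omega) rfl rfl
    rw [Finset.sum_congr rfl this, Finset.sum_ite_eq' (Finset.range N) k (fun _ => K),
      if_pos hk]
  have hA : ∑ k ∈ Finset.range N, (if k + 1 < N then (1:ℝ)/2 else 0) = ((N:ℝ) - 1)/2 := by
    have : ∀ k ∈ Finset.range N, (if k + 1 < N then (1:ℝ)/2 else 0)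
        = 1/2 - (if k = N - 1 then (1:ℝ)/2 else 0) := by
      intro k hk
      have hkN := Finset.mem_range.mp hk
      rcases lt_or_ge (k+1) N with h | h
      · rw [if_pos h, if_neg (by omega)]; ring
      · rw [if_neg (by omega), if_pos (by omega)]; ring
    rw [Finset.sum_congr rfl this, Finset.sum_sub_distrib, Finset.sum_const,
      Finset.card_range, Finset.sum_ite_eq' (Finset.range N) (N-1) (fun _ => (1:ℝ)/2),
      if_pos (Finset.mem_range.mpr (by omega)), nsmul_eq_mul]
    have h1 : (1:ℝ) ≤ (N:ℝ) := by exact_mod_cast hN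
    ring
  have hB : ∑ k ∈ Finset.range N, (if 1 ≤ k then (1:ℝ)/2 else 0) = ((N:ℝ) - 1)/2 := by
    have : ∀ k ∈ Finset.range N, (if 1 ≤ k then (1:ℝ)/2 else 0)
        = 1/2 - (if k = 0 then (1:ℝ)/2 else 0) := by
      intro k hk
      rcases Nat.eq_zero_or_pos k with hk0 | h
      · subst hk0; norm_num
      · rw [if_pos (by omega : 1 ≤ k), if_neg (by omega)]; ring
    rw [Finset.sum_congr rfl this, Finset.sum_sub_distrib, Finset.sum_const,
      Finset.card_range, Finset.sum_ite_eq' (Finset.range N) 0 (fun _ => (1:ℝ)/2),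
      if_pos (Finset.mem_range.mpr (by omega)), nsmul_eq_mul]
    ring
  rw [Finset.sum_sub_distrib, Finset.sum_add_distrib, Finset.sum_congr rfl ha,
    Finset.sum_congr rfl hb, Finset.sum_congr rfl hc, hA, hB, Finset.sum_const,
    Finset.card_range, nsmul_eq_mul]
  ring


lemma re_comb (K : ℝ) (z₁ z₂ z₃ : ℂ) :
    ((((1:ℝ)/2 : ℝ) : ℂ) * z₁ + (((1:ℝ)/2 : ℝ) : ℂ) * z₂ - ((K:ℝ) : ℂ) * z₃).re
      = 1/2 * z₁.re + 1/2 * z₂.re - K * z₃.re := by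
  simp [Complex.add_re, Complex.sub_re, Complex.mul_re, Complex.ofReal_re, Complex.ofReal_im]

set_option maxHeartbeats 2000000 in
lemma A_lower (y α K : ℝ) (hK0 : 0 < K) (hK1 : K < 1) (N : ℕ) (hN1 : 1 ≤ N)
    {σ : ℝ} (hσ : 1 < σ) (C : ℝ) (hC0 : 0 ≤ C)
    (hT : ∀ j : ℤ, j ≠ 0 → -((N:ℤ)+1) ≤ j → j ≤ (N:ℤ)+1 → ‖T y α σ j‖ ≤ C) :
    ((N:ℝ) - 1 - K * (N:ℝ)) * Sig σ - 2 * (N:ℝ)^2 * C ≤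
      ∑' p : Nat.Primes, (Real.cos (y * Real.log (p:ℕ) + α) - K)
        * Complex.normSq (DD N (y * Real.log (p:ℕ) + α)) * ((p:ℕ):ℝ)^(-σ) := by
  -- re bounds for T
  have hre : ∀ j : ℤ, -((N:ℤ)+1) ≤ j → j ≤ (N:ℤ)+1 →
      ((if j = 0 then (1:ℝ) else 0) * Sig σ - C ≤ (T y α σ j).re ∧
       (T y α σ j).re ≤ (if j = 0 then (1:ℝ) else 0) * Sig σ + C) := by
    intro j h1 h2
    by_cases h0 : j = 0
    · subst h0
      rw [T_zero, if_pos rfl, one_mul]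
      rw [Complex.ofReal_re]
      constructor <;> linarith
    · have hb := hT j h0 h1 h2
      have habs : |(T y α σ j).re| ≤ ‖T y α σ j‖ := by
        exact Complex.abs_re_le_norm _
      rw [abs_le] at habs
      rw [if_neg h0, zero_mul]
      constructor <;> linarith [habs.1, habs.2]
  -- the complex identity
  have hAc : ((∑' p : Nat.Primes, (Real.cos (y * Real.log (p:ℕ) + α) - K)
        * Complex.normSq (DD N (y * Real.log (p:ℕ) + α)) * ((p:ℕ):ℝ)^(-σ) : ℝ) : ℂ)
      = ∑ k ∈ Finset.range N, ∑ l ∈ Finset.range N,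
          ((((1:ℝ)/2 : ℝ) : ℂ) * T y α σ ((k:ℤ) - l + 1) + (((1:ℝ)/2 : ℝ) : ℂ) * T y α σ ((k:ℤ) - l - 1)
            - ((K:ℝ) : ℂ) * T y α σ ((k:ℤ) - l)) := by
    rw [Complex.ofReal_tsum]
    have e1 : ∀ p : Nat.Primes,
        (((Real.cos (y * Real.log (p:ℕ) + α) - K)
          * Complex.normSq (DD N (y * Real.log (p:ℕ) + α)) * ((p:ℕ):ℝ)^(-σ) : ℝ) : ℂ)
        = ∑ k ∈ Finset.range N, ∑ l ∈ Finset.range N,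
            ((((1:ℝ)/2 : ℝ) : ℂ) * ee (y * Real.log p + α) ((k:ℤ) - l + 1)
              + (((1:ℝ)/2 : ℝ) : ℂ) * ee (y * Real.log p + α) ((k:ℤ) - l - 1)
              - ((K:ℝ) : ℂ) * ee (y * Real.log p + α) ((k:ℤ) - l)) * ((((p:ℕ):ℝ)^(-σ) : ℝ) : ℂ) := by
      intro p
      rw [Complex.ofReal_mul, key_pointwise K N (y * Real.log (p:ℕ) + α), Finset.sum_mul]
      exact Finset.sum_congr rfl (fun k _ => Finset.sum_mul _ _ _)
    rw [tsum_congr e1, Summable.tsum_finsetSum (fun k _ => summable_sum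
      (fun l _ => summable_comb y α K σ hσ _ _ _))]
    refine Finset.sum_congr rfl (fun k _ => ?_)
    rw [Summable.tsum_finsetSum (fun l _ => summable_comb y α K σ hσ _ _ _)]
    exact Finset.sum_congr rfl (fun l _ => tsum_comb y α K σ hσ _ _ _)
  -- pass to real parts
  have hAre : (∑' p : Nat.Primes, (Real.cos (y * Real.log (p:ℕ) + α) - K)
        * Complex.normSq (DD N (y * Real.log (p:ℕ) + α)) * ((p:ℕ):ℝ)^(-σ))
      = ∑ k ∈ Finset.range N, ∑ l ∈ Finset.range N,
          (1/2 * (T y α σ ((k:ℤ) - l + 1)).re + 1/2 * (T y α σ ((k:ℤ) - l - 1)).re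
            - K * (T y α σ ((k:ℤ) - l)).re) := by
    have h1 := congrArg Complex.re hAc
    rw [Complex.ofReal_re, Complex.re_sum] at h1
    rw [h1]
    refine Finset.sum_congr rfl (fun k _ => ?_)
    rw [Complex.re_sum]
    exact Finset.sum_congr rfl (fun l _ => re_comb K _ _ _)
  rw [hAre]
  -- termwise bound
  have hKC : K * C ≤ C := mul_le_of_le_one_left hC0 hK1.le
  have hterm : ∀ k ∈ Finset.range N, ∀ l ∈ Finset.range N,
      ((if (k:ℤ) - l + 1 = 0 then (1:ℝ)/2 else 0) + (if (k:ℤ) - l - 1 = 0 then (1:ℝ)/2 else 0)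
        - (if (k:ℤ) - l = 0 then K else 0)) * Sig σ - 2*C
      ≤ 1/2 * (T y α σ ((k:ℤ) - l + 1)).re + 1/2 * (T y α σ ((k:ℤ) - l - 1)).re
          - K * (T y α σ ((k:ℤ) - l)).re := by
    intro k hk l hl
    have hkN := Finset.mem_range.mp hk
    have hlN := Finset.mem_range.mp hl
    have h1 := (hre ((k:ℤ) - l + 1) (by omega) (by omega)).1
    have h2 := (hre ((k:ℤ) - l - 1) (by omega) (by omega)).1
    have h3 := (hre ((k:ℤ) - l) (by omega) (by omega)).2
    have h3' := mul_le_mul_of_nonneg_left h3 hK0.le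
    have hS0 := Sig_nonneg (σ := σ)
    split_ifs at h1 h2 h3' ⊢ <;> nlinarith [h1, h2, h3']
  have hsum := Finset.sum_le_sum (f := fun k : ℕ => ∑ l ∈ Finset.range N,
      (((if (k:ℤ) - l + 1 = 0 then (1:ℝ)/2 else 0) + (if (k:ℤ) - l - 1 = 0 then (1:ℝ)/2 else 0)
        - (if (k:ℤ) - l = 0 then K else 0)) * Sig σ - 2*C))
    (g := fun k : ℕ => ∑ l ∈ Finset.range N,
      (1/2 * (T y α σ ((k:ℤ) - l + 1)).re + 1/2 * (T y α σ ((k:ℤ) - l - 1)).re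
        - K * (T y α σ ((k:ℤ) - l)).re))
    (s := Finset.range N)
    (fun k hk => Finset.sum_le_sum (fun l hl => hterm k hk l hl))
  refine le_trans ?_ hsum
  -- compute the coefficient sum
  have hinner : ∀ k ∈ Finset.range N, ∑ l ∈ Finset.range N,
      (((if (k:ℤ) - l + 1 = 0 then (1:ℝ)/2 else 0) + (if (k:ℤ) - l - 1 = 0 then (1:ℝ)/2 else 0)
        - (if (k:ℤ) - l = 0 then K else 0)) * Sig σ - 2*C)
      = (∑ l ∈ Finset.range N,
          ((if (k:ℤ) - l + 1 = 0 then (1:ℝ)/2 else 0) + (if (k:ℤ) - l - 1 = 0 then (1:ℝ)/2 else 0)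
            - (if (k:ℤ) - l = 0 then K else 0))) * Sig σ - (N:ℝ) * (2*C) := by
    intro k _
    rw [Finset.sum_sub_distrib, ← Finset.sum_mul, Finset.sum_const, Finset.card_range,
      nsmul_eq_mul]
  rw [Finset.sum_congr rfl hinner, Finset.sum_sub_distrib, ← Finset.sum_mul, count_sum N hN1 K,
    Finset.sum_const, Finset.card_range, nsmul_eq_mul]
  ring_nf
  nlinarith [Sig_nonneg (σ := σ)]


lemma summable_Aterm (y α K : ℝ) (hK0 : 0 ≤ K) (N : ℕ) {σ : ℝ} (hσ : 1 < σ) :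
    Summable (fun p : Nat.Primes => (Real.cos (y * Real.log (p:ℕ) + α) - K)
      * Complex.normSq (DD N (y * Real.log (p:ℕ) + α)) * ((p:ℕ):ℝ)^(-σ)) := by
  apply Summable.of_norm_bounded (g := fun p : Nat.Primes => ((1+K) * (N:ℝ)^2) * ((p:ℕ):ℝ)^(-σ))
    ((summable_rpow_neg hσ).mul_left _)
  intro p
  rw [Real.norm_eq_abs, abs_mul, abs_mul]
  have h1 : |Real.cos (y * Real.log (p:ℕ) + α) - K| ≤ 1 + K := by
    have := Real.neg_one_le_cos (y * Real.log (p:ℕ) + α)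
    have := Real.cos_le_one (y * Real.log (p:ℕ) + α)
    rw [abs_le]; constructor <;> linarith
  have h2 : |Complex.normSq (DD N (y * Real.log (p:ℕ) + α))| ≤ (N:ℝ)^2 := by
    rw [_root_.abs_of_nonneg (Complex.normSq_nonneg _)]
    exact normSq_DD_le _ _
  have h3 : |((p:ℕ):ℝ)^(-σ)| = ((p:ℕ):ℝ)^(-σ) := _root_.abs_of_nonneg (by positivity)
  rw [h3]
  exact mul_le_mul (mul_le_mul h1 h2 (abs_nonneg _) (by linarith)) le_rfl (by positivity)
    (mul_nonneg (by linarith) (by positivity))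

lemma A_upper (y α K : ℝ) (hK0 : 0 < K) (hK1 : K < 1) (N : ℕ) {σ : ℝ} (hσ : 1 < σ)
    (hS' : Summable (Set.indicator {q : Nat.Primes | K < Real.cos (y * Real.log (q:ℕ) + α)}
      (fun q : Nat.Primes => 1 / ((q:ℕ):ℝ)))) :
    ∑' p : Nat.Primes, (Real.cos (y * Real.log (p:ℕ) + α) - K)
        * Complex.normSq (DD N (y * Real.log (p:ℕ) + α)) * ((p:ℕ):ℝ)^(-σ)
      ≤ (1-K) * (N:ℝ)^2 * ∑' q : Nat.Primes,
          Set.indicator {q : Nat.Primes | K < Real.cos (y * Real.log (q:ℕ) + α)}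
            (fun q : Nat.Primes => 1 / ((q:ℕ):ℝ)) q := by
  rw [← tsum_mul_left]
  apply Summable.tsum_le_tsum _ (summable_Aterm y α K hK0.le N hσ) (hS'.mul_left _)
  intro p
  by_cases hp : p ∈ {q : Nat.Primes | K < Real.cos (y * Real.log (q:ℕ) + α)}
  · rw [Set.indicator_of_mem hp]
    have hcos : K < Real.cos (y * Real.log (p:ℕ) + α) := hp
    have hcos1 := Real.cos_le_one (y * Real.log (p:ℕ) + α)
    have hp2 : (2:ℝ) ≤ ((p:ℕ):ℝ) := two_le p
    have h5 : ((p:ℕ):ℝ)^(-σ) ≤ 1 / ((p:ℕ):ℝ) := by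
      rw [one_div, ← Real.rpow_neg_one]
      apply Real.rpow_le_rpow_of_exponent_le (by linarith) (by linarith)
    calc (Real.cos (y * Real.log (p:ℕ) + α) - K)
          * Complex.normSq (DD N (y * Real.log (p:ℕ) + α)) * ((p:ℕ):ℝ)^(-σ)
        ≤ ((1-K) * (N:ℝ)^2) * (1 / ((p:ℕ):ℝ)) := by
          apply mul_le_mul _ h5 (by positivity) (mul_nonneg (by linarith) (by positivity))
          apply mul_le_mul (by linarith) (normSq_DD_le _ _) (Complex.normSq_nonneg _)
            (by linarith)
      _ = (1-K) * (N:ℝ)^2 * (1 / ((p:ℕ):ℝ)) := by ring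
  · rw [Set.indicator_of_notMem hp, mul_zero]
    have hcos : Real.cos (y * Real.log (p:ℕ) + α) - K ≤ 0 := by
      simp only [Set.mem_setOf_eq, not_lt] at hp
      linarith
    apply mul_nonpos_of_nonpos_of_nonneg _ (by positivity)
    exact mul_nonpos_of_nonpos_of_nonneg hcos (Complex.normSq_nonneg _)


end Stmt4

open Stmt4 Set Filter Topology in
set_option maxHeartbeats 2000000 in
theorem stmt_4 (y α K : ℝ) (hy : 0 < y) (hα0 : 0 ≤ α) (hα2 : α < 2 * π)
    (hK0 : 0 < K) (hK1 : K < 1) :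
    ¬ Summable (fun p : {p : ℕ // p.Prime ∧ K < Real.cos (y * Real.log p + α)} =>
      (1 : ℝ) / p) := by
  intro hS
  have hK1' : (0:ℝ) < 1 - K := by linarith
  -- transfer summability to an indicator on Nat.Primes
  have hS' : Summable (Set.indicator {q : Nat.Primes | K < Real.cos (y * Real.log (q:ℕ) + α)}
      (fun q : Nat.Primes => 1 / ((q:ℕ):ℝ))) := by
    rw [← summable_subtype_iff_indicator]
    let e : {q : Nat.Primes // K < Real.cos (y * Real.log (q:ℕ) + α)} ≃
        {p : ℕ // p.Prime ∧ K < Real.cos (y * Real.log p + α)} :=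
      { toFun := fun q => ⟨(q.1 : ℕ), q.1.2, q.2⟩
        invFun := fun p => ⟨⟨p.1, p.2.1⟩, p.2.2⟩
        left_inv := fun q => rfl
        right_inv := fun p => rfl }
    exact (Equiv.summable_iff e).mpr hS
  set B := ∑' q : Nat.Primes,
      Set.indicator {q : Nat.Primes | K < Real.cos (y * Real.log (q:ℕ) + α)}
        (fun q : Nat.Primes => 1 / ((q:ℕ):ℝ)) q with hBdef
  -- choose N
  obtain ⟨N, hNge⟩ := exists_nat_ge (2/(1-K) + 1)
  have hN1 : 1 ≤ N := by
    have hd : (0:ℝ) < 2/(1-K) := by positivity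
    have h1 : (1:ℝ) ≤ (N:ℝ) := by linarith
    exact_mod_cast h1
  have hNR : (1:ℝ) ≤ (N:ℝ) := by exact_mod_cast hN1
  have hNK : 2/(1-K) ≤ (N:ℝ) := by linarith
  have h2N : 2 ≤ (N:ℝ) * (1-K) := by
    rw [div_le_iff₀ hK1'] at hNK
    linarith
  -- global constant C
  have hTb : ∀ j : ℤ, ∃ C, 0 ≤ C ∧ (j ≠ 0 → ∀ σ ∈ Ioc (1:ℝ) 2, ‖T y α σ j‖ ≤ C) := by
    intro j
    by_cases hj : j = 0
    · exact ⟨0, le_rfl, fun h => absurd hj h⟩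
    · obtain ⟨C, hC0, hC⟩ := T_bounded y α hy j hj
      exact ⟨C, hC0, fun _ => hC⟩
  choose Cf hCf0 hCf using hTb
  set C := ∑ j ∈ Finset.Icc (-(N:ℤ)-1) ((N:ℤ)+1), Cf j with hCdef
  have hC0 : 0 ≤ C := Finset.sum_nonneg (fun j _ => hCf0 j)
  have hTC : ∀ σ ∈ Ioc (1:ℝ) 2, ∀ j : ℤ, j ≠ 0 → -((N:ℤ)+1) ≤ j → j ≤ (N:ℤ)+1 →
      ‖T y α σ j‖ ≤ C := by
    intro σ hσ j hj h1 h2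
    refine (hCf j hj σ hσ).trans ?_
    exact Finset.single_le_sum (fun i _ => hCf0 i) (Finset.mem_Icc.mpr ⟨by omega, h2⟩)
  -- key bound on Sig
  set M₁ := ((1-K) * (N:ℝ)^2 * B + 2 * (N:ℝ)^2 * C) / ((N:ℝ) * (1-K) / 2) with hM₁def
  have hSigB : ∀ σ ∈ Ioc (1:ℝ) 2, Sig σ ≤ M₁ := by
    intro σ hσ
    have hlow := A_lower y α K hK0 hK1 N hN1 hσ.1 C hC0 (hTC σ hσ)
    have hup := A_upper y α K hK0 hK1 N hσ.1 hS'
    have hkey : ((N:ℝ) - 1 - K * (N:ℝ)) * Sig σ ≤ (1-K) * (N:ℝ)^2 * B + 2 * (N:ℝ)^2 * C := by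
      linarith [le_trans hlow hup]
    have hcoef : (N:ℝ) * (1-K) / 2 ≤ (N:ℝ) - 1 - K * (N:ℝ) := by nlinarith
    have hcpos : (0:ℝ) < (N:ℝ) * (1-K) / 2 := by nlinarith
    rw [le_div_iff₀ hcpos]
    calc Sig σ * ((N:ℝ) * (1-K) / 2) ≤ Sig σ * ((N:ℝ) - 1 - K * (N:ℝ)) := by
          apply mul_le_mul_of_nonneg_left hcoef Sig_nonneg
      _ = ((N:ℝ) - 1 - K * (N:ℝ)) * Sig σ := by ring
      _ ≤ (1-K) * (N:ℝ)^2 * B + 2 * (N:ℝ)^2 * C := hkey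
  -- contradiction with divergence of sum of prime reciprocals
  apply Nat.Primes.not_summable_one_div
  have hf0 : (0 : Nat.Primes → ℝ) ≤ fun p : Nat.Primes => (1/(p:ℕ) : ℝ) := by
    intro p
    positivity
  apply summable_of_sum_le (c := M₁) hf0
  intro F
  have heach : ∀ n : ℕ, ∑ p ∈ F, ((p:ℕ):ℝ)^(-(1 + 1/((n:ℝ)+1))) ≤ M₁ := by
    intro n
    have hpos : (0:ℝ) < 1/((n:ℝ)+1) := by positivity
    have hle1 : 1/((n:ℝ)+1) ≤ 1 := by
      rw [div_le_one (by positivity)]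
      simp
    have hσmem : (1 + 1/((n:ℝ)+1)) ∈ Ioc (1:ℝ) 2 := ⟨by linarith, by linarith⟩
    refine le_trans ?_ (hSigB _ hσmem)
    rw [Sig]
    exact Summable.sum_le_tsum F (fun p _ => by positivity) (summable_rpow_neg hσmem.1)
  have hlim : Tendsto (fun n : ℕ => ∑ p ∈ F, ((p:ℕ):ℝ)^(-(1 + 1/((n:ℝ)+1)))) atTop
      (𝓝 (∑ p ∈ F, ((p:ℕ):ℝ)^(-(1:ℝ)))) := by
    apply tendsto_finset_sum
    intro p _
    have hb : (0:ℝ) < ((p:ℕ):ℝ) := by have := two_le p; linarith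
    have hcont : Continuous (fun x : ℝ => ((p:ℕ):ℝ) ^ x) := by
      have he : (fun x : ℝ => ((p:ℕ):ℝ) ^ x)
          = fun x => Real.exp (Real.log ((p:ℕ):ℝ) * x) := by
        funext x
        exact Real.rpow_def_of_pos hb x
      rw [he]
      exact Real.continuous_exp.comp (continuous_const.mul continuous_id)
    have hexp : Tendsto (fun n : ℕ => -(1 + 1/((n:ℝ)+1))) atTop (𝓝 (-1)) := by
      have h1 : Tendsto (fun n : ℕ => 1 + 1/((n:ℝ)+1)) atTop (𝓝 (1+0)) :=
        tendsto_const_nhds.add tendsto_one_div_add_atTop_nhds_zero_nat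
      simpa only [add_zero] using h1.neg
    have := (hcont.continuousAt (x := (-1:ℝ))).tendsto.comp hexp
    simpa [Function.comp_def] using this
  have hfinal := le_of_tendsto hlim (Filter.Eventually.of_forall heach)
  refine le_trans (le_of_eq ?_) hfinal
  refine Finset.sum_congr rfl (fun p _ => ?_)
  have hb : (0:ℝ) < ((p:ℕ):ℝ) := by have := two_le p; linarith
  rw [Real.rpow_neg_one, one_div]
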